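/- Proposition 2 (unbiasedness of CHIPS). Assume Assumption A2 (common cluster support) and Assumption A3 (reward homogeneity, with cluster-level mean reward q̄). Then the CHIPS estimator is unbiased: Σ_{x,c,a} p₀(x,c,a) · w(a,c) · q̄ a c = V(π); equivalently, Bias(ω) = 0 for the weight function ω(x,c,a) = w(a,c). -/
import Mathlib


open Finset

namespace OPE

noncomputable section

variable {X C A : Type*} [Fintype X] [Fintype C] [Fintype A]
  [Nonempty X] [Nonempty C] [Nonempty A]

/-- Cluster marginal `p(c) = Σ_x pX x * pC x c`. -/
def pc (pX : X → ℝ) (pC : X → C → ℝ) (c : C) : ℝ :=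
  ∑ x, pX x * pC x c

/-- Conditional context distribution `p(x|c)` (zero when `p(c) = 0`). -/
def pxc (pX : X → ℝ) (pC : X → C → ℝ) (x : X) (c : C) : ℝ :=
  pX x * pC x c / pc pX pC c

/-- `p(a|c,ρ) = Σ_x p(x|c) * ρ x a`. -/
def pac (pX : X → ℝ) (pC : X → C → ℝ) (ρ : X → A → ℝ) (c : C) (a : A) : ℝ :=
  ∑ x, pxc pX pC x c * ρ x a

/-- IPS weight `w(a,x) = π x a / π₀ x a` (with the convention `t/0 = 0`). -/
def wIPS (π π₀ : X → A → ℝ) (a : A) (x : X) : ℝ := π x a / π₀ x a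

/-- CHIPS weight `w(a,c) = p(a|c,π) / p(a|c,π₀)` (with the convention `t/0 = 0`). -/
def wCHIPS (pX : X → ℝ) (pC : X → C → ℝ) (π π₀ : X → A → ℝ) (a : A) (c : C) : ℝ :=
  pac pX pC π c a / pac pX pC π₀ c a

/-- Policy value `V(π)`. -/
def V (pX : X → ℝ) (pC : X → C → ℝ) (π : X → A → ℝ) (q : A → C → X → ℝ) : ℝ :=
  ∑ x, ∑ c, ∑ a, pX x * pC x c * π x a * q a c x

/-- Single-sample mean of a weighted estimator under the logging distribution. -/
def mu (pX : X → ℝ) (pC : X → C → ℝ) (π₀ : X → A → ℝ) (q : A → C → X → ℝ)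
    (ω : X → C → A → ℝ) : ℝ :=
  ∑ x, ∑ c, ∑ a, (pX x * pC x c * π₀ x a) * ω x c a * q a c x

/-- Bias of a weighted estimator. -/
def bias (pX : X → ℝ) (pC : X → C → ℝ) (π π₀ : X → A → ℝ) (q : A → C → X → ℝ)
    (ω : X → C → A → ℝ) : ℝ :=
  mu pX pC π₀ q ω - V pX pC π q

/-- Single-sample variance of a weighted estimator. -/
def varW (pX : X → ℝ) (pC : X → C → ℝ) (π₀ : X → A → ℝ) (q m2 : A → C → X → ℝ)
    (ω : X → C → A → ℝ) : ℝ :=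
  (∑ x, ∑ c, ∑ a, (pX x * pC x c * π₀ x a) * ω x c a ^ 2 * m2 a c x)
    - (mu pX pC π₀ q ω) ^ 2

/-- Single-sample mean squared error of a weighted estimator. -/
def mseW (pX : X → ℝ) (pC : X → C → ℝ) (π π₀ : X → A → ℝ) (q m2 : A → C → X → ℝ)
    (ω : X → C → A → ℝ) : ℝ :=
  (∑ x, ∑ c, ∑ a, (pX x * pC x c * π₀ x a) * ω x c a ^ 2 * m2 a c x)
    - 2 * V pX pC π q * mu pX pC π₀ q ω + (V pX pC π q) ^ 2


lemma pc_nonneg (pX : X → ℝ) (pC : X → C → ℝ) (hpX0 : ∀ x, 0 ≤ pX x)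
    (hpC0 : ∀ x c, 0 ≤ pC x c) (c : C) : 0 ≤ pc pX pC c :=
  Finset.sum_nonneg fun x _ => mul_nonneg (hpX0 x) (hpC0 x c)

lemma pac_nonneg (pX : X → ℝ) (pC : X → C → ℝ) (ρ : X → A → ℝ)
    (hpX0 : ∀ x, 0 ≤ pX x) (hpC0 : ∀ x c, 0 ≤ pC x c) (hρ : ∀ x a, 0 ≤ ρ x a)
    (c : C) (a : A) : 0 ≤ pac pX pC ρ c a :=
  Finset.sum_nonneg fun x _ => mul_nonneg
    (div_nonneg (mul_nonneg (hpX0 x) (hpC0 x c)) (pc_nonneg pX pC hpX0 hpC0 c)) (hρ x a)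

lemma sum_pc_pac (pX : X → ℝ) (pC : X → C → ℝ) (ρ : X → A → ℝ)
    (hpX0 : ∀ x, 0 ≤ pX x) (hpC0 : ∀ x c, 0 ≤ pC x c) (c : C) (a : A) :
    ∑ x, pX x * pC x c * ρ x a = pc pX pC c * pac pX pC ρ c a := by
  rcases eq_or_lt_of_le (pc_nonneg pX pC hpX0 hpC0 c) with h | h
  · rw [← h, zero_mul]
    refine Finset.sum_eq_zero fun x _ => ?_
    have hx : pX x * pC x c = 0 :=
      (Finset.sum_eq_zero_iff_of_nonneg
        (fun x _ => mul_nonneg (hpX0 x) (hpC0 x c))).mp h.symm x (Finset.mem_univ x)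
    rw [hx, zero_mul]
  · rw [pac, Finset.mul_sum]
    refine Finset.sum_congr rfl fun x _ => ?_
    rw [pxc]
    field_simp

/-- Proposition 2 (unbiasedness of CHIPS). -/
theorem prop2_chips_unbiased
    (pX : X → ℝ) (pC : X → C → ℝ) (π π₀ : X → A → ℝ)
    (q : A → C → X → ℝ) (qbar : A → C → ℝ)
    (hpX0 : ∀ x, 0 ≤ pX x) (hpX1 : ∑ x, pX x = 1)
    (hpC0 : ∀ x c, 0 ≤ pC x c) (hpC1 : ∀ x, ∑ c, pC x c = 1)
    (hπ : ∀ x a, 0 ≤ π x a) (hπ1 : ∀ x, ∑ a, π x a = 1)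
    (hπ₀ : ∀ x a, 0 ≤ π₀ x a) (hπ₀1 : ∀ x, ∑ a, π₀ x a = 1)
    (hA2 : ∀ (a : A) (c : C), 0 < pc pX pC c →
      0 < pac pX pC π c a → 0 < pac pX pC π₀ c a)
    (hA3 : ∀ (a : A) (c : C) (x : X), q a c x = qbar a c) :
    (∑ x, ∑ c, ∑ a, (pX x * pC x c * π₀ x a) *
        wCHIPS pX pC π π₀ a c * qbar a c) = V pX pC π q ∧
    bias pX pC π π₀ q (fun _ c a => wCHIPS pX pC π π₀ a c) = 0 := by
  have key : ∀ c a, pc pX pC c * pac pX pC π₀ c a * wCHIPS pX pC π π₀ a c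
      = pc pX pC c * pac pX pC π c a := by
    intro c a
    rcases eq_or_lt_of_le (pc_nonneg pX pC hpX0 hpC0 c) with h | h
    · rw [← h, zero_mul, zero_mul, zero_mul]
    · rcases eq_or_lt_of_le (pac_nonneg pX pC π₀ hpX0 hpC0 hπ₀ c a) with h0 | h0
      · have hπ' : pac pX pC π c a = 0 := by
          by_contra hne
          have hpos : 0 < pac pX pC π c a :=
            lt_of_le_of_ne (pac_nonneg pX pC π hpX0 hpC0 hπ c a) (Ne.symm hne)
          have := hA2 a c h hpos
          rw [← h0] at this
          exact lt_irrefl 0 this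
        rw [wCHIPS, ← h0, div_zero, mul_zero, hπ', mul_zero]
      · rw [wCHIPS, mul_assoc, mul_comm (pac pX pC π₀ c a),
          div_mul_cancel₀ _ h0.ne']
  have hmain : (∑ x, ∑ c, ∑ a, (pX x * pC x c * π₀ x a) *
      wCHIPS pX pC π π₀ a c * qbar a c) = V pX pC π q := by
    have L : (∑ x, ∑ c, ∑ a, (pX x * pC x c * π₀ x a) *
        wCHIPS pX pC π π₀ a c * qbar a c)
        = ∑ c, ∑ a, (pc pX pC c * pac pX pC π₀ c a) *
            wCHIPS pX pC π π₀ a c * qbar a c := by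
      rw [Finset.sum_comm]
      refine Finset.sum_congr rfl fun c _ => ?_
      rw [Finset.sum_comm]
      refine Finset.sum_congr rfl fun a _ => ?_
      rw [← sum_pc_pac pX pC π₀ hpX0 hpC0 c a, Finset.sum_mul, Finset.sum_mul]
    have R : V pX pC π q = ∑ c, ∑ a, pc pX pC c * pac pX pC π c a * qbar a c := by
      rw [V, Finset.sum_comm]
      refine Finset.sum_congr rfl fun c _ => ?_
      rw [Finset.sum_comm]
      refine Finset.sum_congr rfl fun a _ => ?_
      rw [← sum_pc_pac pX pC π hpX0 hpC0 c a, Finset.sum_mul]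
      exact Finset.sum_congr rfl fun x _ => by rw [hA3]
    rw [L, R]
    exact Finset.sum_congr rfl fun c _ => Finset.sum_congr rfl fun a _ => by
      rw [key c a]
  refine ⟨hmain, ?_⟩
  rw [bias, sub_eq_zero, mu]
  rw [← hmain]
  exact Finset.sum_congr rfl fun x _ => Finset.sum_congr rfl fun c _ =>
    Finset.sum_congr rfl fun a _ => by rw [hA3]

end

end OPE
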